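/- Let Prop := {p, p̄} (two distinct propositions). Let L' be a monotone fragment of LTL(Prop) such that X ∈ Op', U ∉ Op', and Op' contains at least one of the atomic propositions p, p̄. Then for every n ∈ ℕ there exists a sample S = (𝒫,𝒩) of ultimately periodic words in W(Prop) with k := Σ_{w ∈ 𝒫∪𝒩} ‖w‖ ≥ n such that some L'-formula is S-separating and every S-separating L'-formula has size at least 2^{√k}. -/

import Mathlib

open scoped Classical

/-- Formulas of linear temporal logic `LTL(Prop)`:
`φ ::= p | ¬φ | φ∨φ | φ∧φ | Xφ | Fφ | Gφ | φUφ`. -/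
inductive LTL (P : Type) : Type
  | atom : P → LTL P
  | not : LTL P → LTL P
  | or : LTL P → LTL P → LTL P
  | and : LTL P → LTL P → LTL P
  | next : LTL P → LTL P
  | fut : LTL P → LTL P
  | glob : LTL P → LTL P
  | untl : LTL P → LTL P → LTL P

/-- Satisfaction of an `LTL` formula on a finite word over `2^P`
(a list of sets of propositions). -/
def satFin {P : Type} : LTL P → List (Set P) → Prop
  | .atom p, w => p ∈ w.getD 0 ∅
  | .not φ, w => ¬ satFin φ w
  | .or φ ψ, w => satFin φ w ∨ satFin ψ w
  | .and φ ψ, w => satFin φ w ∧ satFin ψ w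
  | .next φ, w => 2 ≤ w.length ∧ satFin φ w.tail
  | .fut φ, w => ∃ j < w.length, satFin φ (w.drop j)
  | .glob φ, w => ∀ j < w.length, satFin φ (w.drop j)
  | .untl φ ψ, w => ∃ j < w.length, satFin ψ (w.drop j) ∧ ∀ k < j, satFin φ (w.drop k)

/-- Satisfaction of an `LTL` formula on an infinite word over `2^P`. -/
def satInf {P : Type} : LTL P → (ℕ → Set P) → Prop
  | .atom p, w => p ∈ w 0
  | .not φ, w => ¬ satInf φ w
  | .or φ ψ, w => satInf φ w ∨ satInf ψ w
  | .and φ ψ, w => satInf φ w ∧ satInf ψ w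
  | .next φ, w => satInf φ (fun i => w (i + 1))
  | .fut φ, w => ∃ j, satInf φ (fun i => w (i + j))
  | .glob φ, w => ∀ j, satInf φ (fun i => w (i + j))
  | .untl φ ψ, w => ∃ j, satInf ψ (fun i => w (i + j)) ∧ ∀ k < j, satInf φ (fun i => w (i + k))

/-- A model of `W(Prop)`: either a non-empty finite word `u` (when `v = []`) or
the ultimately periodic infinite word `u·v^ω` (when `v ≠ []`). -/
structure UPWord (P : Type) where
  u : List (Set P)
  v : List (Set P)
  ne : u ≠ [] ∨ v ≠ []

namespace UPWord

variable {P : Type}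

/-- The letter of the infinite word `u·v^ω` at position `i`. -/
def letter (w : UPWord P) (i : ℕ) : Set P :=
  if i < w.u.length then w.u.getD i ∅
  else w.v.getD ((i - w.u.length) % w.v.length) ∅

/-- Satisfaction of an `LTL` formula on a word of `W(Prop)`. -/
def sat (w : UPWord P) (φ : LTL P) : Prop :=
  if w.v = [] then satFin φ w.u else satInf φ w.letter

/-- `‖w‖`, the size of (the representation of) a word of `W(Prop)`. -/
def norm (w : UPWord P) : ℕ := w.u.length + w.v.length

end UPWord

/-- A fragment of `LTL(Prop)`: a subset of the operators
(atomic propositions, `¬`, `∨`, `∧`, `X`, `F`, `G`, `U`). -/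
structure LTLFragment (P : Type) where
  atoms : Set P
  hasNot : Prop
  hasOr : Prop
  hasAnd : Prop
  hasNext : Prop
  hasFut : Prop
  hasGlob : Prop
  hasUntil : Prop

/-- A formula belongs to the fragment if it is built using only its operators. -/
def LTLFragment.Mem {P : Type} (F : LTLFragment P) : LTL P → Prop
  | .atom p => p ∈ F.atoms
  | .not φ => F.hasNot ∧ F.Mem φ
  | .or φ ψ => F.hasOr ∧ F.Mem φ ∧ F.Mem ψ
  | .and φ ψ => F.hasAnd ∧ F.Mem φ ∧ F.Mem ψ
  | .next φ => F.hasNext ∧ F.Mem φ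
  | .fut φ => F.hasFut ∧ F.Mem φ
  | .glob φ => F.hasGlob ∧ F.Mem φ
  | .untl φ ψ => F.hasUntil ∧ F.Mem φ ∧ F.Mem ψ

/-- The set of subformulas of an `LTL` formula. -/
def LTLSub {P : Type} : LTL P → Set (LTL P)
  | .atom p => {.atom p}
  | .not φ => insert (.not φ) (LTLSub φ)
  | .or φ ψ => insert (.or φ ψ) (LTLSub φ ∪ LTLSub ψ)
  | .and φ ψ => insert (.and φ ψ) (LTLSub φ ∪ LTLSub ψ)
  | .next φ => insert (.next φ) (LTLSub φ)
  | .fut φ => insert (.fut φ) (LTLSub φ)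
  | .glob φ => insert (.glob φ) (LTLSub φ)
  | .untl φ ψ => insert (.untl φ ψ) (LTLSub φ ∪ LTLSub ψ)

/-- The (syntax-DAG) size of an `LTL` formula: its number of distinct subformulas. -/
noncomputable def LTLsz {P : Type} (φ : LTL P) : ℕ := (LTLSub φ).ncard

namespace LTLLower

variable {P : Type}

/-- X-nesting depth of a formula. -/
def Xdepth : LTL P → ℕ
  | .atom _ => 0
  | .not φ => Xdepth φ
  | .or φ ψ => max (Xdepth φ) (Xdepth ψ)
  | .and φ ψ => max (Xdepth φ) (Xdepth ψ)
  | .next φ => Xdepth φ + 1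
  | .fut φ => Xdepth φ
  | .glob φ => Xdepth φ
  | .untl φ ψ => max (Xdepth φ) (Xdepth ψ)

/-- Tree size. -/
def tsz : LTL P → ℕ
  | .atom _ => 1
  | .not φ => tsz φ + 1
  | .or φ ψ => tsz φ + tsz ψ + 1
  | .and φ ψ => tsz φ + tsz ψ + 1
  | .next φ => tsz φ + 1
  | .fut φ => tsz φ + 1
  | .glob φ => tsz φ + 1
  | .untl φ ψ => tsz φ + tsz ψ + 1

lemma tsz_le_of_mem (φ : LTL P) : ∀ ψ ∈ LTLSub φ, tsz ψ ≤ tsz φ := by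
  induction φ with
  | atom p => intro ψ h; simp only [LTLSub, Set.mem_singleton_iff] at h; subst h; simp [tsz]
  | not φ ih =>
      intro ψ h
      simp only [LTLSub, Set.mem_insert_iff] at h
      rcases h with rfl | h
      · exact le_refl _
      · exact le_trans (ih ψ h) (by simp [tsz])
  | next φ ih =>
      intro ψ h
      simp only [LTLSub, Set.mem_insert_iff] at h
      rcases h with rfl | h
      · exact le_refl _
      · exact le_trans (ih ψ h) (by simp [tsz])
  | fut φ ih =>
      intro ψ h
      simp only [LTLSub, Set.mem_insert_iff] at h
      rcases h with rfl | h
      · exact le_refl _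
      · exact le_trans (ih ψ h) (by simp [tsz])
  | glob φ ih =>
      intro ψ h
      simp only [LTLSub, Set.mem_insert_iff] at h
      rcases h with rfl | h
      · exact le_refl _
      · exact le_trans (ih ψ h) (by simp [tsz])
  | or φ χ ih1 ih2 =>
      intro ψ h
      simp only [LTLSub, Set.mem_insert_iff, Set.mem_union] at h
      rcases h with rfl | h | h
      · exact le_refl _
      · exact le_trans (ih1 ψ h) (by simp [tsz]; omega)
      · exact le_trans (ih2 ψ h) (by simp [tsz]; omega)
  | and φ χ ih1 ih2 =>
      intro ψ h
      simp only [LTLSub, Set.mem_insert_iff, Set.mem_union] at h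
      rcases h with rfl | h | h
      · exact le_refl _
      · exact le_trans (ih1 ψ h) (by simp [tsz]; omega)
      · exact le_trans (ih2 ψ h) (by simp [tsz]; omega)
  | untl φ χ ih1 ih2 =>
      intro ψ h
      simp only [LTLSub, Set.mem_insert_iff, Set.mem_union] at h
      rcases h with rfl | h | h
      · exact le_refl _
      · exact le_trans (ih1 ψ h) (by simp [tsz]; omega)
      · exact le_trans (ih2 ψ h) (by simp [tsz]; omega)

lemma LTLSub_finite (φ : LTL P) : (LTLSub φ).Finite := by
  induction φ with
  | atom p => simp [LTLSub]
  | not φ ih => exact (ih.insert _)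
  | next φ ih => exact (ih.insert _)
  | fut φ ih => exact (ih.insert _)
  | glob φ ih => exact (ih.insert _)
  | or φ χ ih1 ih2 => exact ((ih1.union ih2).insert _)
  | and φ χ ih1 ih2 => exact ((ih1.union ih2).insert _)
  | untl φ χ ih1 ih2 => exact ((ih1.union ih2).insert _)

lemma Xdepth_lt_sz (φ : LTL P) : Xdepth φ < LTLsz φ := by
  induction φ with
  | atom p => simp [Xdepth, LTLsz, LTLSub]
  | not φ ih =>
      have h : (LTLSub φ).ncard ≤ (LTLSub (LTL.not φ)).ncard :=
        Set.ncard_le_ncard (by simp [LTLSub]) ((LTLSub_finite φ).insert _)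
      simpa [Xdepth, LTLsz] using lt_of_lt_of_le ih h
  | fut φ ih =>
      have h : (LTLSub φ).ncard ≤ (LTLSub (LTL.fut φ)).ncard :=
        Set.ncard_le_ncard (by simp [LTLSub]) ((LTLSub_finite φ).insert _)
      simpa [Xdepth, LTLsz] using lt_of_lt_of_le ih h
  | glob φ ih =>
      have h : (LTLSub φ).ncard ≤ (LTLSub (LTL.glob φ)).ncard :=
        Set.ncard_le_ncard (by simp [LTLSub]) ((LTLSub_finite φ).insert _)
      simpa [Xdepth, LTLsz] using lt_of_lt_of_le ih h
  | next φ ih =>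
      have hnm : LTL.next φ ∉ LTLSub φ := by
        intro h
        have := tsz_le_of_mem φ _ h
        simp [tsz] at this
      have : (LTLSub (LTL.next φ)).ncard = (LTLSub φ).ncard + 1 := by
        simp only [LTLSub]
        exact Set.ncard_insert_of_notMem hnm (LTLSub_finite φ)
      simp only [LTLsz, Xdepth] at *
      omega
  | or φ χ ih1 ih2 =>
      have h1 : (LTLSub φ).ncard ≤ (LTLSub (LTL.or φ χ)).ncard :=
        Set.ncard_le_ncard (by intro x hx; simp [LTLSub]; tauto)
          (((LTLSub_finite φ).union (LTLSub_finite χ)).insert _)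
      have h2 : (LTLSub χ).ncard ≤ (LTLSub (LTL.or φ χ)).ncard :=
        Set.ncard_le_ncard (by intro x hx; simp [LTLSub]; tauto)
          (((LTLSub_finite φ).union (LTLSub_finite χ)).insert _)
      simp only [LTLsz, Xdepth] at *
      omega
  | and φ χ ih1 ih2 =>
      have h1 : (LTLSub φ).ncard ≤ (LTLSub (LTL.and φ χ)).ncard :=
        Set.ncard_le_ncard (by intro x hx; simp [LTLSub]; tauto)
          (((LTLSub_finite φ).union (LTLSub_finite χ)).insert _)
      have h2 : (LTLSub χ).ncard ≤ (LTLSub (LTL.and φ χ)).ncard :=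
        Set.ncard_le_ncard (by intro x hx; simp [LTLSub]; tauto)
          (((LTLSub_finite φ).union (LTLSub_finite χ)).insert _)
      simp only [LTLsz, Xdepth] at *
      omega
  | untl φ χ ih1 ih2 =>
      have h1 : (LTLSub φ).ncard ≤ (LTLSub (LTL.untl φ χ)).ncard :=
        Set.ncard_le_ncard (by intro x hx; simp [LTLSub]; tauto)
          (((LTLSub_finite φ).union (LTLSub_finite χ)).insert _)
      have h2 : (LTLSub χ).ncard ≤ (LTLSub (LTL.untl φ χ)).ncard :=
        Set.ncard_le_ncard (by intro x hx; simp [LTLSub]; tauto)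
          (((LTLSub_finite φ).union (LTLSub_finite χ)).insert _)
      simp only [LTLsz, Xdepth] at *
      omega

end LTLLower

namespace LTLLower

/-- The positive word for the ∨-case: `univ` at odd positions. -/
def Pw : ℕ → Set Bool := fun j => if j % 2 = 1 then Set.univ else ∅

/-- Negative words for the ∨-case: `∅` exactly at multiples of `c`. -/
def Nw (c : ℕ) : ℕ → Set Bool := fun j => if j % c = 0 then ∅ else Set.univ

/-- Shift of an infinite word. -/
def sh (w : ℕ → Set Bool) (x : ℕ) : ℕ → Set Bool := fun t => w (t + x)

lemma sh_add (w : ℕ → Set Bool) (x j : ℕ) :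
    (fun i => sh w x (i + j)) = sh w (x + j) := by
  funext t
  show w (t + j + x) = w (t + (x + j))
  have h : t + j + x = t + (x + j) := by omega
  rw [h]

lemma satInf_next_sh (φ : LTL Bool) (w : ℕ → Set Bool) (x : ℕ) :
    satInf (.next φ) (sh w x) ↔ satInf φ (sh w (x + 1)) := by
  simp only [satInf]; rw [sh_add]

lemma satInf_fut_sh (φ : LTL Bool) (w : ℕ → Set Bool) (x : ℕ) :
    satInf (.fut φ) (sh w x) ↔ ∃ j, satInf φ (sh w (x + j)) := by
  simp only [satInf]
  constructor
  · rintro ⟨j, hj⟩; exact ⟨j, by rwa [sh_add] at hj⟩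
  · rintro ⟨j, hj⟩; exact ⟨j, by rwa [sh_add]⟩

lemma satInf_glob_sh (φ : LTL Bool) (w : ℕ → Set Bool) (x : ℕ) :
    satInf (.glob φ) (sh w x) ↔ ∀ j, satInf φ (sh w (x + j)) := by
  simp only [satInf]
  constructor
  · intro h j; have := h j; rwa [sh_add] at this
  · intro h j; rw [sh_add]; exact h j

lemma Pw_congr {a b : ℕ} (h : a ≡ b [MOD 2]) : Pw a = Pw b := by
  unfold Pw; rw [Nat.ModEq] at h; rw [h]

lemma Nw_congr {c : ℕ} {a b : ℕ} (h : a ≡ b [MOD c]) : Nw c a = Nw c b := by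
  unfold Nw; rw [Nat.ModEq] at h; rw [h]

lemma sh_Pw_congr {a b : ℕ} (h : a ≡ b [MOD 2]) : sh Pw a = sh Pw b := by
  funext t; exact Pw_congr (h.add_left t)

lemma sh_Nw_congr {c : ℕ} {a b : ℕ} (h : a ≡ b [MOD c]) : sh (Nw c) a = sh (Nw c) b := by
  funext t; exact Nw_congr (h.add_left t)

lemma crt (m l : ℕ → ℕ) (S : Finset ℕ)
    (hcop : ∀ p ∈ S, ∀ q ∈ S, p ≠ q → Nat.Coprime (m p) (m q)) :
    ∃ w, ∀ p ∈ S, w ≡ l p [MOD m p] := by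
  classical
  induction S using Finset.induction_on with
  | empty => exact ⟨0, by simp⟩
  | @insert a s ha ih =>
      obtain ⟨w1, hw1⟩ := ih (fun p hp q hq hpq =>
        hcop p (Finset.mem_insert_of_mem hp) q (Finset.mem_insert_of_mem hq) hpq)
      have hco : Nat.Coprime (m a) (∏ p ∈ s, m p) :=
        Nat.Coprime.prod_right fun q hq =>
          hcop a (Finset.mem_insert_self a s) q (Finset.mem_insert_of_mem hq)
            (by rintro rfl; exact ha hq)
      obtain ⟨w, hwa, hws⟩ := Nat.chineseRemainder hco (l a) w1
      refine ⟨w, ?_⟩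
      intro p hp
      rcases Finset.mem_insert.mp hp with rfl | hp
      · exact hwa
      · exact (hws.of_dvd (Finset.dvd_prod_of_mem m hp)).trans (hw1 p hp)

lemma prod_dvd_of_forall_dvd (m : ℕ → ℕ) (S : Finset ℕ)
    (hcop : ∀ p ∈ S, ∀ q ∈ S, p ≠ q → Nat.Coprime (m p) (m q))
    {x : ℕ} (h : ∀ p ∈ S, m p ∣ x) : (∏ p ∈ S, m p) ∣ x := by
  classical
  induction S using Finset.induction_on with
  | empty => simpa using one_dvd x
  | @insert a s ha ih =>
      rw [Finset.prod_insert ha]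
      have hco : Nat.Coprime (m a) (∏ p ∈ s, m p) :=
        Nat.Coprime.prod_right fun q hq =>
          hcop a (Finset.mem_insert_self a s) q (Finset.mem_insert_of_mem hq)
            (by rintro rfl; exact ha hq)
      exact hco.mul_dvd_of_dvd_of_dvd (h a (Finset.mem_insert_self a s))
        (ih (fun p hp q hq hpq =>
            hcop p (Finset.mem_insert_of_mem hp) q (Finset.mem_insert_of_mem hq) hpq)
          (fun p hp => h p (Finset.mem_insert_of_mem hp)))

lemma prod_odd (m : ℕ → ℕ) (S : Finset ℕ) (h : ∀ p ∈ S, m p % 2 = 1) :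
    (∏ p ∈ S, m p) % 2 = 1 := by
  classical
  induction S using Finset.induction_on with
  | empty => simp
  | @insert a s ha ih =>
      rw [Finset.prod_insert ha, Nat.mul_mod, h a (Finset.mem_insert_self a s),
        ih (fun p hp => h p (Finset.mem_insert_of_mem hp))]

end LTLLower

namespace LTLLower

/-- The key semantic lemma: over the sample consisting of the positive word `Pw`
and the negative words `Nw (m p)`, `p ∈ S`, any separating formula of a monotone
fragment with `∨` (no `¬`, `∧`, `U`) must have `X`-depth at least `M - 1`. -/
lemma core (S : Finset ℕ) (m : ℕ → ℕ) (M : ℕ)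
    (hModd : M % 2 = 1)
    (hdvdM : ∀ p ∈ S, m p ∣ M)
    (hMdvdx : ∀ x : ℕ, (∀ p ∈ S, m p ∣ x) → M ∣ x)
    (hcop : ∀ p ∈ S, ∀ q ∈ S, p ≠ q → Nat.Coprime (m p) (m q))
    (G : LTLFragment Bool) (hnN : ¬ G.hasNot) (hnA : ¬ G.hasAnd) (hnU : ¬ G.hasUntil) :
    ∀ φ : LTL Bool, G.Mem φ → Xdepth φ + 2 ≤ M →
      ∀ x : ℕ, satInf φ (sh Pw x) → (∀ p ∈ S, ¬ satInf φ (sh (Nw (m p)) x)) →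
      ∃ e ≤ Xdepth φ, (x + e) ≡ M [MOD 2 * M] := by
  intro φ
  induction φ with
  | atom b =>
      intro _ _ x hP hN
      refine ⟨0, le_refl _, ?_⟩
      simp only [satInf, sh, Pw, Nw, Nat.zero_add] at hP hN
      have hodd : x % 2 = 1 := by
        by_contra h
        rw [if_neg h] at hP
        exact hP
      have hdvd : ∀ p ∈ S, m p ∣ x := by
        intro p hp
        have := hN p hp
        by_cases h : x % m p = 0
        · exact Nat.dvd_of_mod_eq_zero h
        · rw [if_neg h] at this; exact absurd (Set.mem_univ b) this
      obtain ⟨t, rfl⟩ := hMdvdx x hdvd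
      have hM1 : M % 2 = 1 := hModd
      have ht : t % 2 = 1 := by
        rcases Nat.even_or_odd t with he | ho
        · obtain ⟨s, rfl⟩ := he
          rw [Nat.mul_mod, hM1] at hodd; omega
        · exact Nat.odd_iff.mp ho
      obtain ⟨s, hs⟩ := Nat.odd_iff.mpr ht
      have heq : M * t + 0 = M + 2 * M * s := by rw [hs]; ring
      rw [heq]
      exact ((Nat.modEq_iff_dvd' (by omega)).mpr
        ⟨s, by have : M + 2 * M * s - M = 2 * M * s := by omega
               rw [this]⟩).symm
  | not φ ih => intro hmem; exact absurd hmem.1 hnN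
  | and φ ψ ih1 ih2 => intro hmem; exact absurd hmem.1 hnA
  | untl φ ψ ih1 ih2 => intro hmem; exact absurd hmem.1 hnU
  | or φ ψ ih1 ih2 =>
      intro hmem hd x hP hN
      simp only [satInf] at hP
      have hN1 : ∀ p ∈ S, ¬ satInf φ (sh (Nw (m p)) x) := by
        intro p hp h; exact hN p hp (by simp only [satInf]; exact Or.inl h)
      have hN2 : ∀ p ∈ S, ¬ satInf ψ (sh (Nw (m p)) x) := by
        intro p hp h; exact hN p hp (by simp only [satInf]; exact Or.inr h)
      have hdφ : Xdepth φ + 2 ≤ M := by simp only [Xdepth] at hd; omega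
      have hdψ : Xdepth ψ + 2 ≤ M := by simp only [Xdepth] at hd; omega
      rcases hP with h | h
      · obtain ⟨e, he, hmod⟩ := ih1 hmem.2.1 hdφ x h hN1
        exact ⟨e, le_trans he (by simp [Xdepth]), hmod⟩
      · obtain ⟨e, he, hmod⟩ := ih2 hmem.2.2 hdψ x h hN2
        exact ⟨e, le_trans he (by simp [Xdepth]), hmod⟩
  | next φ ih =>
      intro hmem hd x hP hN
      rw [satInf_next_sh] at hP
      have hN' : ∀ p ∈ S, ¬ satInf φ (sh (Nw (m p)) (x + 1)) := by
        intro p hp h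
        exact hN p hp ((satInf_next_sh φ (Nw (m p)) x).mpr h)
      have hdφ : Xdepth φ + 2 ≤ M := by simp only [Xdepth] at hd; omega
      obtain ⟨e, he, hmod⟩ := ih hmem.2 hdφ (x + 1) hP hN'
      refine ⟨e + 1, by simp only [Xdepth]; omega, ?_⟩
      have : x + (e + 1) = x + 1 + e := by omega
      rw [this]; exact hmod
  | fut φ ih =>
      intro hmem hd x hP hN
      rw [satInf_fut_sh] at hP
      obtain ⟨j0, hj0⟩ := hP
      have hN' : ∀ p ∈ S, ∀ j, ¬ satInf φ (sh (Nw (m p)) (x + j)) := by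
        intro p hp j h
        exact hN p hp ((satInf_fut_sh φ (Nw (m p)) x).mpr ⟨j, h⟩)
      have hdφ : Xdepth (LTL.fut φ) = Xdepth φ := rfl
      set d := Xdepth φ with hdd
      have key : ∀ s : Fin M, ∃ e, e ≤ d ∧ (x + (j0 + 2 * s) + e) ≡ M [MOD 2 * M] := by
        intro s
        have hPs : satInf φ (sh Pw (x + (j0 + 2 * s))) := by
          have hcong : x + j0 ≡ x + (j0 + 2 * (s : ℕ)) [MOD 2] := by
            have : x + (j0 + 2 * (s : ℕ)) = (x + j0) + 2 * (s : ℕ) := by omega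
            rw [this]
            exact (Nat.modEq_iff_dvd' (by omega)).mpr ⟨(s : ℕ), by omega⟩
          rwa [← sh_Pw_congr hcong]
        have hNs : ∀ p ∈ S, ¬ satInf φ (sh (Nw (m p)) (x + (j0 + 2 * s))) :=
          fun p hp => hN' p hp _
        obtain ⟨e, he, hmod⟩ := ih hmem.2 (by rw [hdφ] at hd; omega) _ hPs hNs
        exact ⟨e, he, hmod⟩
      choose e he hmod using key
      have hM2 : 2 ≤ M := by rw [hdφ] at hd; omega
      have hinj : Function.Injective (fun s : Fin M => (⟨e s, by have := he s; omega⟩ : Fin (d + 1))) := by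
        intro s1 s2 hss
        have hee : e s1 = e s2 := by simpa using congrArg Fin.val hss
        have h1 := hmod s1
        have h2 := hmod s2
        rw [hee] at h1
        have htr : x + (j0 + 2 * (s1 : ℕ)) + e s2 ≡ x + (j0 + 2 * (s2 : ℕ)) + e s2 [MOD 2 * M] :=
          h1.trans h2.symm
        have h3 : (x + j0 + e s2) + 2 * (s1 : ℕ) ≡ (x + j0 + e s2) + 2 * (s2 : ℕ) [MOD 2 * M] := by
          have e1 : x + (j0 + 2 * (s1 : ℕ)) + e s2 = (x + j0 + e s2) + 2 * (s1 : ℕ) := by omega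
          have e2 : x + (j0 + 2 * (s2 : ℕ)) + e s2 = (x + j0 + e s2) + 2 * (s2 : ℕ) := by omega
          rwa [e1, e2] at htr
        have h4 : 2 * (s1 : ℕ) ≡ 2 * (s2 : ℕ) [MOD 2 * M] := h3.add_left_cancel' _
        have h5 : (s1 : ℕ) ≡ (s2 : ℕ) [MOD M] := Nat.ModEq.mul_left_cancel' (by omega) h4
        have h6 : (s1 : ℕ) = (s2 : ℕ) := by
          have := h5
          unfold Nat.ModEq at this
          rw [Nat.mod_eq_of_lt s1.isLt, Nat.mod_eq_of_lt s2.isLt] at this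
          exact this
        exact Fin.ext h6
      have hcard := Fintype.card_le_of_injective _ hinj
      simp only [Fintype.card_fin] at hcard
      rw [hdφ] at hd
      omega
  | glob φ ih =>
      intro hmem hd x hP hN
      rw [satInf_glob_sh] at hP
      have hN' : ∀ p ∈ S, ∃ j, ¬ satInf φ (sh (Nw (m p)) (x + j)) := by
        intro p hp
        by_contra h
        push_neg at h
        exact hN p hp ((satInf_glob_sh φ (Nw (m p)) x).mpr h)
      classical
      choose jn hjn using hN'
      set l : ℕ → ℕ := fun p => if hp : p ∈ S then x + jn p hp else 0 with hl
      obtain ⟨w0, hw0⟩ := crt m l S hcop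
      set w : ℕ := w0 + 2 * M * (x + 1) with hw
      have hM2 : 2 ≤ M := by have : Xdepth (LTL.glob φ) = Xdepth φ := rfl; omega
      have hwx : x ≤ w := by
        have : 2 * M * (x + 1) ≥ x + 1 := Nat.le_mul_of_pos_left _ (by omega)
        omega
      have hwmod : ∀ p (hp : p ∈ S), w ≡ x + jn p hp [MOD m p] := by
        intro p hp
        have h1 : w ≡ w0 [MOD m p] := by
          have : m p ∣ 2 * M * (x + 1) := Dvd.dvd.mul_right (Dvd.dvd.mul_left (hdvdM p hp) 2) _
          exact (Nat.modEq_iff_dvd' (by omega)).mpr (by simpa [hw] using this) |>.symm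
        have h2 := hw0 p hp
        rw [hl] at h2
        simp only [dif_pos hp] at h2
        exact h1.trans h2
      have satP_at : ∀ y, x ≤ y → satInf φ (sh Pw y) := by
        intro y hy
        have := hP (y - x)
        rwa [Nat.add_sub_cancel' hy] at this
      have satN_not : ∀ p (hp : p ∈ S), ∀ y, y ≡ x + jn p hp [MOD m p] →
          ¬ satInf φ (sh (Nw (m p)) y) := by
        intro p hp y hy h
        rw [sh_Nw_congr hy] at h
        exact hjn p hp h
      have hdφ : Xdepth φ + 2 ≤ M := hd
      obtain ⟨e1, he1, hm1⟩ := ih hmem.2 hdφ w (satP_at w hwx)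
        (fun p hp => satN_not p hp w (hwmod p hp))
      obtain ⟨e2, he2, hm2⟩ := ih hmem.2 hdφ (w + M) (satP_at (w + M) (by omega))
        (fun p hp => satN_not p hp (w + M)
          (((Nat.modEq_iff_dvd' (by omega)).mpr (by simpa using hdvdM p hp)).symm.trans (hwmod p hp)))
      exfalso
      have htr : w + e1 ≡ w + (M + e2) [MOD 2 * M] := by
        have : w + M + e2 = w + (M + e2) := by omega
        rw [this] at hm2
        exact hm1.trans hm2.symm
      have hc : e1 ≡ M + e2 [MOD 2 * M] := htr.add_left_cancel' _
      unfold Nat.ModEq at hc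
      rw [Nat.mod_eq_of_lt (by omega), Nat.mod_eq_of_lt (by omega)] at hc
      omega

end LTLLower

namespace LTLLower

variable {P : Type}

/-- Dual formula: swaps `∨/∧` and `F/G`. -/
def dualF : LTL P → LTL P
  | .atom p => .atom p
  | .not φ => .not (dualF φ)
  | .or φ ψ => .and (dualF φ) (dualF ψ)
  | .and φ ψ => .or (dualF φ) (dualF ψ)
  | .next φ => .next (dualF φ)
  | .fut φ => .glob (dualF φ)
  | .glob φ => .fut (dualF φ)
  | .untl φ ψ => .untl (dualF φ) (dualF ψ)

/-- Dual fragment. -/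
def dualFrag (F : LTLFragment P) : LTLFragment P :=
  ⟨F.atoms, F.hasNot, F.hasAnd, F.hasOr, F.hasNext, F.hasGlob, F.hasFut, F.hasUntil⟩

lemma Mem_dualF {F : LTLFragment P} : ∀ φ, F.Mem φ → (dualFrag F).Mem (dualF φ) := by
  intro φ h
  induction φ with
  | atom p => exact h
  | not φ ih => exact ⟨h.1, ih h.2⟩
  | or φ ψ ih1 ih2 => exact ⟨h.1, ih1 h.2.1, ih2 h.2.2⟩
  | and φ ψ ih1 ih2 => exact ⟨h.1, ih1 h.2.1, ih2 h.2.2⟩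
  | next φ ih => exact ⟨h.1, ih h.2⟩
  | fut φ ih => exact ⟨h.1, ih h.2⟩
  | glob φ ih => exact ⟨h.1, ih h.2⟩
  | untl φ ψ ih1 ih2 => exact ⟨h.1, ih1 h.2.1, ih2 h.2.2⟩

lemma Xdepth_dualF : ∀ φ : LTL P, Xdepth (dualF φ) = Xdepth φ := by
  intro φ
  induction φ with
  | atom p => rfl
  | not φ ih => simpa [dualF, Xdepth] using ih
  | or φ ψ ih1 ih2 => simp [dualF, Xdepth, ih1, ih2]
  | and φ ψ ih1 ih2 => simp [dualF, Xdepth, ih1, ih2]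
  | next φ ih => simp [dualF, Xdepth, ih]
  | fut φ ih => simpa [dualF, Xdepth] using ih
  | glob φ ih => simpa [dualF, Xdepth] using ih
  | untl φ ψ ih1 ih2 => simp [dualF, Xdepth, ih1, ih2]

/-- Until-free formulas. -/
def noU : LTL P → Prop
  | .atom _ => True
  | .not φ => noU φ
  | .or φ ψ => noU φ ∧ noU ψ
  | .and φ ψ => noU φ ∧ noU ψ
  | .next φ => noU φ
  | .fut φ => noU φ
  | .glob φ => noU φ
  | .untl _ _ => False

lemma noU_of_Mem {F : LTLFragment P} (hU : ¬ F.hasUntil) : ∀ φ, F.Mem φ → noU φ := by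
  intro φ h
  induction φ with
  | atom p => trivial
  | not φ ih => exact ih h.2
  | or φ ψ ih1 ih2 => exact ⟨ih1 h.2.1, ih2 h.2.2⟩
  | and φ ψ ih1 ih2 => exact ⟨ih1 h.2.1, ih2 h.2.2⟩
  | next φ ih => exact ih h.2
  | fut φ ih => exact ih h.2
  | glob φ ih => exact ih h.2
  | untl φ ψ ih1 ih2 => exact absurd h.1 hU

lemma satInf_dualF : ∀ φ : LTL Bool, noU φ → ∀ w : ℕ → Set Bool,
    (satInf (dualF φ) w ↔ ¬ satInf φ (fun j => (w j)ᶜ)) := by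
  intro φ
  induction φ with
  | atom p => intro _ w; simp [satInf, dualF]
  | not φ ih =>
      intro hU w
      simp only [satInf, dualF, ih hU w]
  | or φ ψ ih1 ih2 =>
      intro hU w
      simp only [satInf, dualF, ih1 hU.1 w, ih2 hU.2 w]
      tauto
  | and φ ψ ih1 ih2 =>
      intro hU w
      simp only [satInf, dualF, ih1 hU.1 w, ih2 hU.2 w]
      tauto
  | next φ ih =>
      intro hU w
      simp only [satInf, dualF]
      exact ih hU _
  | fut φ ih =>
      intro hU w
      simp only [satInf, dualF]
      constructor
      · rintro h ⟨j, hj⟩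
        exact (ih hU _).mp (h j) hj
      · intro h j
        rw [ih hU]
        intro hc
        exact h ⟨j, hc⟩
  | glob φ ih =>
      intro hU w
      simp only [satInf, dualF]
      constructor
      · rintro ⟨j, hj⟩ h
        exact (ih hU _).mp hj (h j)
      · intro h
        by_contra hc
        push_neg at hc
        apply h
        intro j
        by_contra hcj
        exact hc j ((ih hU _).mpr hcj)
  | untl φ ψ ih1 ih2 => intro hU; exact absurd hU (by simp [noU])

/-- `X^n φ`. -/
def Xpow : ℕ → LTL P → LTL P
  | 0, ψ => ψ
  | n + 1, ψ => .next (Xpow n ψ)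

lemma Mem_Xpow {F : LTLFragment P} (h : F.hasNext) {ψ : LTL P} (hψ : F.Mem ψ) :
    ∀ n, F.Mem (Xpow n ψ) := by
  intro n
  induction n with
  | zero => exact hψ
  | succ n ih => exact ⟨h, ih⟩

lemma Xdepth_Xpow (ψ : LTL P) : ∀ n, Xdepth (Xpow n ψ) = Xdepth ψ + n := by
  intro n
  induction n with
  | zero => simp [Xpow]
  | succ n ih => simp [Xpow, Xdepth, ih]; omega

lemma sh_zero (w : ℕ → Set Bool) : sh w 0 = w := by funext t; simp [sh]

lemma satInf_Xpow (ψ : LTL Bool) (w : ℕ → Set Bool) :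
    ∀ n x, satInf (Xpow n ψ) (sh w x) ↔ satInf ψ (sh w (x + n)) := by
  intro n
  induction n with
  | zero => intro x; simp [Xpow]
  | succ n ih =>
      intro x
      show satInf (.next (Xpow n ψ)) (sh w x) ↔ _
      rw [satInf_next_sh, ih (x + 1)]
      have : x + 1 + n = x + (n + 1) := by omega
      rw [this]

lemma getD_replicate {α : Type} (a d : α) : ∀ (n k : ℕ), k < n →
    (List.replicate n a).getD k d = a := by
  intro n
  induction n with
  | zero => intro k hk; omega
  | succ n ih =>
      intro k hk
      rw [List.replicate_succ]
      cases k with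
      | zero => rfl
      | succ k => simpa using ih k (by omega)

/-- The positive UP-word for the ∨-case. -/
def wordP : UPWord Bool := ⟨[], [∅, Set.univ], Or.inr (by simp)⟩

/-- The negative UP-words for the ∨-case. -/
def wordN (c : ℕ) : UPWord Bool :=
  ⟨[], (∅ : Set Bool) :: List.replicate (c - 1) Set.univ, Or.inr (by simp)⟩

/-- The negative UP-word for the ∧-case. -/
def wordQ : UPWord Bool := ⟨[], [Set.univ, ∅], Or.inr (by simp)⟩

/-- The positive UP-words for the ∧-case. -/
def wordPos (c : ℕ) : UPWord Bool :=
  ⟨[], Set.univ :: List.replicate (c - 1) (∅ : Set Bool), Or.inr (by simp)⟩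

lemma letter_eq (u : UPWord Bool) (hu : u.u = []) (i : ℕ) :
    u.letter i = u.v.getD (i % u.v.length) ∅ := by
  rw [UPWord.letter, hu]
  simp

lemma wordP_letter : wordP.letter = Pw := by
  funext i
  rw [letter_eq wordP rfl]
  show ([(∅ : Set Bool), Set.univ]).getD (i % 2) ∅ = Pw i
  rcases Nat.mod_two_eq_zero_or_one i with h | h <;> rw [h] <;> simp [Pw, h]

lemma wordQ_letter : wordQ.letter = (fun j => (Pw j)ᶜ) := by
  funext i
  rw [letter_eq wordQ rfl]
  show ([Set.univ, (∅ : Set Bool)]).getD (i % 2) ∅ = (Pw i)ᶜ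
  unfold Pw
  rcases Nat.mod_two_eq_zero_or_one i with h | h
  · rw [h, if_neg (by norm_num), Set.compl_empty, List.getD_cons_zero]
  · rw [h, if_pos rfl, Set.compl_univ, List.getD_cons_succ, List.getD_cons_zero]

lemma wordN_letter (c : ℕ) (hc : 1 ≤ c) : (wordN c).letter = Nw c := by
  funext i
  rw [letter_eq (wordN c) rfl]
  have hlen : (wordN c).v.length = c := by
    show ((∅ : Set Bool) :: List.replicate (c - 1) Set.univ).length = c
    simp; omega
  rw [show (wordN c).v = (∅ : Set Bool) :: List.replicate (c - 1) Set.univ from rfl] at hlen ⊢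
  rw [hlen]
  unfold Nw
  by_cases h : i % c = 0
  · rw [h]; simp
  · rw [if_neg h]
    have hik : i % c < c := Nat.mod_lt _ (by omega)
    obtain ⟨k, hk⟩ : ∃ k, i % c = k + 1 := ⟨i % c - 1, by omega⟩
    rw [hk]
    show (List.replicate (c - 1) Set.univ).getD k ∅ = Set.univ
    exact getD_replicate _ _ _ _ (by omega)

lemma wordPos_letter (c : ℕ) (hc : 1 ≤ c) : (wordPos c).letter = (fun j => (Nw c j)ᶜ) := by
  funext i
  rw [letter_eq (wordPos c) rfl]
  have hlen : (wordPos c).v.length = c := by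
    show (Set.univ :: List.replicate (c - 1) (∅ : Set Bool)).length = c
    simp; omega
  rw [show (wordPos c).v = Set.univ :: List.replicate (c - 1) (∅ : Set Bool) from rfl] at hlen ⊢
  rw [hlen]
  unfold Nw
  by_cases h : i % c = 0
  · rw [h, if_pos rfl, Set.compl_empty, List.getD_cons_zero]
  · rw [if_neg h]
    have hik : i % c < c := Nat.mod_lt _ (by omega)
    obtain ⟨k, hk⟩ : ∃ k, i % c = k + 1 := ⟨i % c - 1, by omega⟩
    rw [hk]
    show (List.replicate (c - 1) (∅ : Set Bool)).getD k ∅ = (Set.univ : Set Bool)ᶜ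
    rw [getD_replicate _ _ _ _ (by omega), Set.compl_univ]

lemma sat_iff_letter (u : UPWord Bool) (hv : u.v ≠ []) (φ : LTL Bool) :
    u.sat φ ↔ satInf φ u.letter := by
  rw [UPWord.sat, if_neg hv]

end LTLLower

namespace LTLLower

lemma sixtyfour_t4_le (t : ℕ) (ht : 32 ≤ t) : 64 * t ^ 4 ≤ 2 ^ t := by
  induction t, ht using Nat.le_induction with
  | base => norm_num
  | succ t ht ih =>
      have hc1 : t ^ 2 ≤ t ^ 3 := Nat.pow_le_pow_right (by omega) (by omega)
      have hc2 : t ≤ t ^ 3 := by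
        calc t = t ^ 1 := (pow_one t).symm
          _ ≤ t ^ 3 := Nat.pow_le_pow_right (by omega) (by omega)
      have hc3 : 1 ≤ t ^ 3 := Nat.one_le_pow _ _ (by omega)
      have hc4 : t ^ 3 * 32 ≤ t ^ 3 * t := Nat.mul_le_mul_left _ (by omega)
      have hc5 : t ^ 3 * t = t ^ 4 := by ring
      have h1 : 64 * (t + 1) ^ 4 ≤ 2 * (64 * t ^ 4) := by nlinarith
      calc 64 * (t + 1) ^ 4 ≤ 2 * (64 * t ^ 4) := h1
        _ ≤ 2 * 2 ^ t := by omega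
        _ = 2 ^ (t + 1) := by rw [pow_succ]; ring

lemma numeric (n : ℕ) : ∃ (S : Finset ℕ) (m : ℕ → ℕ),
    (∀ p ∈ S, 3 ≤ m p) ∧ (∀ p ∈ S, m p % 2 = 1) ∧
    (∀ p ∈ S, ∀ q ∈ S, p ≠ q → Nat.Coprime (m p) (m q)) ∧
    Set.InjOn m S ∧
    n ≤ 2 + ∑ p ∈ S, m p ∧
    (2:ℝ) ^ Real.sqrt (((2 + ∑ p ∈ S, m p : ℕ) : ℝ)) ≤ ((∏ p ∈ S, m p : ℕ) : ℝ) := by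
  classical
  set t : ℕ := 8 * max n 64 with htdef
  have ht64 : 512 ≤ t := by
    have : 64 ≤ max n 64 := le_max_right _ _
    omega
  set x : ℕ := 2 * t with hxdef
  set S : Finset ℕ := (Finset.range (x + 1)).filter (fun p => Nat.Prime p ∧ p ≠ 2) with hSdef
  set m : ℕ → ℕ := fun p => p ^ (Nat.log p x) with hmdef
  have hx1024 : 1024 ≤ x := by rw [hxdef]; omega
  have hxn16 : 16 * n ≤ x := by
    have h1 : n ≤ max n 64 := le_max_left _ _
    rw [hxdef, htdef]; omega
  have hxpos : 0 < x := by omega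
  have hSmem : ∀ p, p ∈ S ↔ p ≤ x ∧ Nat.Prime p ∧ p ≠ 2 := by
    intro p
    simp only [hSdef, Finset.mem_filter, Finset.mem_range]
    constructor
    · rintro ⟨h1, h2⟩; exact ⟨by omega, h2⟩
    · rintro ⟨h1, h2⟩; exact ⟨by omega, h2⟩
  have hSprime : ∀ p ∈ S, Nat.Prime p := fun p hp => ((hSmem p).mp hp).2.1
  have hSodd : ∀ p ∈ S, p % 2 = 1 := by
    intro p hp
    obtain ⟨hle, hpr, hne⟩ := (hSmem p).mp hp
    exact Nat.odd_iff.mp (hpr.odd_of_ne_two hne)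
  have hS3 : ∀ p ∈ S, 3 ≤ p := by
    intro p hp
    obtain ⟨hle, hpr, hne⟩ := (hSmem p).mp hp
    have := hpr.two_le
    have := hSodd p hp
    omega
  have hlog1 : ∀ p ∈ S, 1 ≤ Nat.log p x := by
    intro p hp
    obtain ⟨hle, hpr, hne⟩ := (hSmem p).mp hp
    have hple : p ^ 1 ≤ x := by simpa using hle
    have := (Nat.le_log_iff_pow_le hpr.one_lt hxpos.ne').mpr hple
    omega
  have hm3 : ∀ p ∈ S, 3 ≤ m p := by
    intro p hp
    have h1 : p ≤ m p := Nat.le_self_pow (by have := hlog1 p hp; omega) p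
    have := hS3 p hp
    omega
  have hmodd : ∀ p ∈ S, m p % 2 = 1 := by
    intro p hp
    have : Odd (p ^ Nat.log p x) := (Nat.odd_iff.mpr (hSodd p hp)).pow
    exact Nat.odd_iff.mp this
  have hmlex : ∀ p ∈ S, m p ≤ x := by
    intro p hp
    exact Nat.pow_log_le_self p (by omega)
  have hcop : ∀ p ∈ S, ∀ q ∈ S, p ≠ q → Nat.Coprime (m p) (m q) := by
    intro p hp q hq hpq
    exact Nat.Coprime.pow _ _ ((Nat.coprime_primes (hSprime p hp) (hSprime q hq)).mpr hpq)
  have hinj : Set.InjOn m S := by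
    intro p hp q hq hmeq
    by_contra hne
    have hco := hcop p hp q hq hne
    rw [hmeq] at hco
    have h1 : m q = 1 := by rwa [Nat.Coprime, Nat.gcd_self] at hco
    exact absurd h1 (by have := hm3 q hq; omega)
  have h3S : 3 ∈ S := (hSmem 3).mpr ⟨by omega, by norm_num, by norm_num⟩
  -- K ≥ n
  have hm3big : n < m 3 := by
    have hx3 : x < 3 ^ (Nat.log 3 x + 1) := Nat.lt_pow_succ_log_self (by norm_num) x
    have h3m : 3 ^ (Nat.log 3 x + 1) = 3 * m 3 := by
      rw [hmdef]; rw [pow_succ]; ring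
    omega
  have hKn : n ≤ 2 + ∑ p ∈ S, m p := by
    have h1 : m 3 ≤ ∑ p ∈ S, m p :=
      Finset.single_le_sum (f := m) (fun p _ => Nat.zero_le _) h3S
    omega
  -- card bound
  have hcard : S.card ≤ t := by
    have hmap : ∀ p ∈ S, p / 2 ∈ Finset.range t := by
      intro p hp
      obtain ⟨hle, _, _⟩ := (hSmem p).mp hp
      have := hSodd p hp
      simp only [Finset.mem_range]
      omega
    have hinj2 : Set.InjOn (fun p => p / 2) S := by
      intro p hp q hq h
      have h1 := hSodd p hp
      have h2 := hSodd q hq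
      simp only at h
      omega
    simpa using Finset.card_le_card_of_injOn _ hmap hinj2
  have hsum : ∑ p ∈ S, m p ≤ t * x := by
    calc ∑ p ∈ S, m p ≤ S.card • x := Finset.sum_le_card_nsmul S m x hmlex
      _ = S.card * x := by simp [smul_eq_mul]
      _ ≤ t * x := Nat.mul_le_mul_right _ hcard
  -- the product is large: M² ≥ 2^(3t)
  set M : ℕ := ∏ p ∈ S, m p with hMdef
  have hMpos : 0 < M := Finset.prod_pos (fun p hp => by have := hm3 p hp; omega)
  have hbig : 2 ^ (3 * t) ≤ M ^ 2 := by
    set L : ℕ := Finset.lcm (Finset.Icc 1 x) id with hLdef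
    have hLpos : L ≠ 0 := by
      rw [hLdef]
      intro h
      rw [Finset.lcm_eq_zero_iff] at h
      obtain ⟨i, hi, hi0⟩ := h
      simp only [Finset.coe_Icc, Set.mem_Icc, Finset.mem_Icc, id] at hi hi0
      omega
    have hCB : Nat.centralBinom t ∣ L := by
      rw [← Nat.factorization_le_iff_dvd (Nat.centralBinom_ne_zero t) hLpos]
      intro p
      by_cases hp : Nat.Prime p
      · have h1 : p ^ (Nat.centralBinom t).factorization p ≤ 2 * t := by
          rw [Nat.centralBinom]
          exact Nat.pow_factorization_choose_le (by omega)
        have hdvdL : p ^ (Nat.centralBinom t).factorization p ∣ L := by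
          apply Finset.dvd_lcm
          simp only [Finset.mem_Icc]
          constructor
          · exact Nat.one_le_pow _ _ hp.pos
          · omega
        exact (hp.pow_dvd_iff_le_factorization hLpos).mp hdvdL
      · simp [Nat.factorization_eq_zero_of_not_prime _ hp]
    have hLle : L ∣ 2 ^ (Nat.log 2 x) * M := by
      rw [hLdef]
      apply Finset.lcm_dvd
      intro i hi
      simp only [Finset.mem_Icc] at hi
      have hipos : i ≠ 0 := by omega
      have hD : (2 : ℕ) ^ Nat.log 2 x * M ≠ 0 := by positivity
      rw [id, ← Nat.factorization_le_iff_dvd hipos hD]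
      intro p
      by_cases hp : Nat.Prime p
      · by_cases hpx : p ∣ i
        · have hplex : p ≤ x := le_trans (Nat.le_of_dvd (by omega) hpx) hi.2
          have hvi : i.factorization p ≤ Nat.log p x := by
            have h1 : p ^ i.factorization p ≤ i := Nat.ordProj_le p hipos
            exact (Nat.le_log_iff_pow_le hp.one_lt (by omega)).mpr (le_trans h1 hi.2)
          have hfD : (2 ^ Nat.log 2 x * M).factorization p
              = (2 ^ (Nat.log 2 x) : ℕ).factorization p + M.factorization p := by
            rw [Nat.factorization_mul (by positivity) (by omega)]
            simp
          by_cases hp2 : p = 2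
          · subst hp2
            have : ((2 : ℕ) ^ Nat.log 2 x).factorization 2 = Nat.log 2 x := by
              rw [Nat.Prime.factorization_pow Nat.prime_two]
              simp
            rw [hfD, this]
            have : i.factorization 2 ≤ Nat.log 2 x := by
              have h1 : 2 ^ i.factorization 2 ≤ i := Nat.ordProj_le 2 hipos
              exact (Nat.le_log_iff_pow_le (by norm_num) (by omega)).mpr (le_trans h1 hi.2)
            omega
          · have hpS : p ∈ S := (hSmem p).mpr ⟨hplex, hp, hp2⟩
            have hmdvd : m p ∣ M := Finset.dvd_prod_of_mem m hpS
            obtain ⟨c, hc⟩ := hmdvd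
            have hc0 : c ≠ 0 := by
              intro h; rw [h, mul_zero] at hc; omega
            have hfM : Nat.log p x ≤ M.factorization p := by
              rw [hc, Nat.factorization_mul (by have := hm3 p hpS; omega) hc0]
              have : (m p).factorization p = Nat.log p x := by
                rw [hmdef]
                simp only
                rw [Nat.Prime.factorization_pow hp]
                simp
              simp only [Finsupp.coe_add, Pi.add_apply]
              omega
            rw [hfD]
            omega
        · simp [Nat.factorization_eq_zero_of_not_dvd hpx]
      · simp [Nat.factorization_eq_zero_of_not_prime _ hp]
    -- chain of inequalities
    have h4t : 4 ^ t ≤ 2 * t * Nat.centralBinom t :=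
      Nat.four_pow_le_two_mul_self_mul_centralBinom t (by omega)
    have hCBle : Nat.centralBinom t ≤ L := Nat.le_of_dvd (by omega) hCB
    have hLle' : L ≤ 2 ^ (Nat.log 2 x) * M := Nat.le_of_dvd (by positivity) hLle
    have h2a : 2 ^ (Nat.log 2 x) ≤ x := Nat.pow_log_le_self 2 (by omega)
    have hchain : 4 ^ t ≤ 4 * t ^ 2 * M := by
      calc 4 ^ t ≤ 2 * t * Nat.centralBinom t := h4t
        _ ≤ 2 * t * L := Nat.mul_le_mul_left _ hCBle
        _ ≤ 2 * t * (2 ^ (Nat.log 2 x) * M) := Nat.mul_le_mul_left _ hLle'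
        _ ≤ 2 * t * (x * M) := Nat.mul_le_mul_left _ (Nat.mul_le_mul_right _ h2a)
        _ = 4 * t ^ 2 * M := by rw [hxdef]; ring
    have h64 : 64 * t ^ 4 ≤ 2 ^ t := sixtyfour_t4_le t (by omega)
    -- square the chain
    by_contra hM2
    push_neg at hM2
    have hsq : (4 ^ t) * (4 ^ t) ≤ (4 * t ^ 2 * M) * (4 * t ^ 2 * M) :=
      Nat.mul_le_mul hchain hchain
    have he1 : (4 ^ t) * (4 ^ t) = 2 ^ t * 2 ^ (3 * t) := by
      rw [show (4 : ℕ) = 2 ^ 2 from rfl, ← pow_mul, ← pow_add, ← pow_add]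
      congr 1
      omega
    have he2 : (4 * t ^ 2 * M) * (4 * t ^ 2 * M) = 16 * t ^ 4 * M ^ 2 := by ring
    rw [he1, he2] at hsq
    have hlt : 16 * t ^ 4 * M ^ 2 < 16 * t ^ 4 * 2 ^ (3 * t) := by
      have hpos : 0 < 16 * t ^ 4 := by positivity
      exact mul_lt_mul_of_pos_left hM2 hpos
    have hfin : 2 ^ t * 2 ^ (3 * t) < 16 * t ^ 4 * 2 ^ (3 * t) := lt_of_le_of_lt hsq hlt
    have : 2 ^ t < 16 * t ^ 4 := by
      have h3tpos : 0 < 2 ^ (3 * t) := by positivity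
      exact lt_of_mul_lt_mul_right hfin (Nat.zero_le _)
    omega
  -- now the real inequality
  refine ⟨S, m, hm3, hmodd, hcop, hinj, hKn, ?_⟩
  have hK : (2 + ∑ p ∈ S, m p : ℕ) ≤ 2 + 2 * t ^ 2 := by
    have : t * x = 2 * t ^ 2 := by rw [hxdef]; ring
    omega
  have hsqrt : Real.sqrt (((2 + ∑ p ∈ S, m p : ℕ) : ℝ)) ≤ (3 * t : ℝ) / 2 := by
    have h1 : (((2 + ∑ p ∈ S, m p : ℕ) : ℝ)) ≤ ((3 * t : ℝ) / 2) ^ 2 := by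
      have h2 : (((2 + ∑ p ∈ S, m p : ℕ) : ℝ)) ≤ ((2 + 2 * t ^ 2 : ℕ) : ℝ) := by
        exact_mod_cast hK
      have h3 : ((2 + 2 * t ^ 2 : ℕ) : ℝ) ≤ ((3 * t : ℝ) / 2) ^ 2 := by
        push_cast
        have ht' : (512 : ℝ) ≤ (t : ℝ) := by exact_mod_cast ht64
        nlinarith
      linarith
    calc Real.sqrt (((2 + ∑ p ∈ S, m p : ℕ) : ℝ)) ≤ Real.sqrt (((3 * t : ℝ) / 2) ^ 2) :=
          Real.sqrt_le_sqrt h1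
      _ = (3 * t : ℝ) / 2 := Real.sqrt_sq (by positivity)
  have hstep1 : (2:ℝ) ^ Real.sqrt (((2 + ∑ p ∈ S, m p : ℕ) : ℝ)) ≤ (2:ℝ) ^ ((3 * t : ℝ) / 2) :=
    Real.rpow_le_rpow_of_exponent_le one_le_two hsqrt
  have hstep2 : (2:ℝ) ^ ((3 * t : ℝ) / 2) ≤ (M : ℝ) := by
    have ha : (0:ℝ) ≤ (2:ℝ) ^ ((3 * t : ℝ) / 2) := (Real.rpow_pos_of_pos (by norm_num) _).le
    have hsq : ((2:ℝ) ^ ((3 * t : ℝ) / 2)) * ((2:ℝ) ^ ((3 * t : ℝ) / 2)) = ((2 ^ (3 * t) : ℕ) : ℝ) := by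
      rw [← Real.rpow_add (by norm_num)]
      have : (3 * t : ℝ) / 2 + (3 * t : ℝ) / 2 = ((3 * t : ℕ) : ℝ) := by push_cast; ring
      rw [this, Real.rpow_natCast]
      push_cast
      ring
    have hMR : ((2 ^ (3 * t) : ℕ) : ℝ) ≤ ((M : ℝ)) * ((M : ℝ)) := by
      have : ((2 ^ (3 * t) : ℕ) : ℝ) ≤ ((M ^ 2 : ℕ) : ℝ) := by exact_mod_cast hbig
      calc ((2 ^ (3 * t) : ℕ) : ℝ) ≤ ((M ^ 2 : ℕ) : ℝ) := this
        _ = (M : ℝ) * (M : ℝ) := by push_cast; ring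
    set a : ℝ := (2:ℝ) ^ ((3 * t : ℝ) / 2)
    have : a = Real.sqrt (a * a) := (Real.sqrt_mul_self ha).symm
    rw [this]
    calc Real.sqrt (a * a) ≤ Real.sqrt ((M : ℝ) * (M : ℝ)) := by
          apply Real.sqrt_le_sqrt
          rw [hsq] at *
          linarith [hMR]
      _ = (M : ℝ) := Real.sqrt_mul_self (by positivity)
  exact le_trans hstep1 hstep2

end LTLLower

namespace LTLLower

lemma wordP_vne : wordP.v ≠ [] := by simp [wordP]
lemma wordQ_vne : wordQ.v ≠ [] := by simp [wordQ]
lemma wordN_vne (c : ℕ) : (wordN c).v ≠ [] := by simp [wordN]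
lemma wordPos_vne (c : ℕ) : (wordPos c).v ≠ [] := by simp [wordPos]

lemma norm_wordP : wordP.norm = 2 := rfl
lemma norm_wordQ : wordQ.norm = 2 := rfl

lemma wordN_v_length (c : ℕ) (hc : 1 ≤ c) : (wordN c).v.length = c := by
  show ((∅ : Set Bool) :: List.replicate (c - 1) Set.univ).length = c
  simp; omega

lemma wordPos_v_length (c : ℕ) (hc : 1 ≤ c) : (wordPos c).v.length = c := by
  show (Set.univ :: List.replicate (c - 1) (∅ : Set Bool)).length = c
  simp; omega

lemma norm_wordN (c : ℕ) (hc : 1 ≤ c) : (wordN c).norm = c := by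
  show (wordN c).u.length + (wordN c).v.length = c
  rw [wordN_v_length c hc]
  show ([] : List (Set Bool)).length + c = c
  simp

lemma norm_wordPos (c : ℕ) (hc : 1 ≤ c) : (wordPos c).norm = c := by
  show (wordPos c).u.length + (wordPos c).v.length = c
  rw [wordPos_v_length c hc]
  show ([] : List (Set Bool)).length + c = c
  simp

lemma satInf_Xpow_atom (b : Bool) (w : ℕ → Set Bool) (n : ℕ) :
    satInf (Xpow n (.atom b)) w ↔ b ∈ w n := by
  rw [← sh_zero w, satInf_Xpow]
  simp [satInf, sh]

end LTLLower

namespace LTLLower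

lemma wordN_inj (S : Finset ℕ) (m : ℕ → ℕ) (hm3 : ∀ p ∈ S, 3 ≤ m p)
    (hinj : Set.InjOn m S) :
    ∀ p ∈ S, ∀ q ∈ S, wordN (m p) = wordN (m q) → p = q := by
  intro p hp q hq heq
  have hlen := congrArg (fun u : UPWord Bool => u.v.length) heq
  beta_reduce at hlen
  rw [wordN_v_length _ (by have := hm3 p hp; omega),
    wordN_v_length _ (by have := hm3 q hq; omega)] at hlen
  exact hinj hp hq hlen

lemma wordPos_inj (S : Finset ℕ) (m : ℕ → ℕ) (hm3 : ∀ p ∈ S, 3 ≤ m p)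
    (hinj : Set.InjOn m S) :
    ∀ p ∈ S, ∀ q ∈ S, wordPos (m p) = wordPos (m q) → p = q := by
  intro p hp q hq heq
  have hlen := congrArg (fun u : UPWord Bool => u.v.length) heq
  beta_reduce at hlen
  rw [wordPos_v_length _ (by have := hm3 p hp; omega),
    wordPos_v_length _ (by have := hm3 q hq; omega)] at hlen
  exact hinj hp hq hlen

lemma sum_words_or (S : Finset ℕ) (m : ℕ → ℕ) (hm3 : ∀ p ∈ S, 3 ≤ m p)
    (hinj : Set.InjOn m S) :
    ∑ w ∈ {wordP} ∪ S.image (fun p => wordN (m p)), w.norm = 2 + ∑ p ∈ S, m p := by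
  have hdisj : Disjoint ({wordP} : Finset (UPWord Bool)) (S.image fun p => wordN (m p)) := by
    rw [Finset.disjoint_left]
    intro w hw hw2
    have hwP := Finset.mem_singleton.mp hw
    subst hwP
    obtain ⟨p, hp, heq⟩ := Finset.mem_image.mp hw2
    have hlen := congrArg (fun u : UPWord Bool => u.v.length) heq
    beta_reduce at hlen
    rw [wordN_v_length _ (by have := hm3 p hp; omega)] at hlen
    have : wordP.v.length = 2 := rfl
    have := hm3 p hp
    omega
  rw [Finset.sum_union hdisj, Finset.sum_singleton, norm_wordP,
    Finset.sum_image (wordN_inj S m hm3 hinj)]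
  congr 1
  exact Finset.sum_congr rfl (fun p hp => norm_wordN _ (by have := hm3 p hp; omega))

lemma sum_words_pos (S : Finset ℕ) (m : ℕ → ℕ) (hm3 : ∀ p ∈ S, 3 ≤ m p)
    (hinj : Set.InjOn m S) :
    ∑ w ∈ S.image (fun p => wordPos (m p)) ∪ {wordQ}, w.norm = 2 + ∑ p ∈ S, m p := by
  have hdisj : Disjoint (S.image fun p => wordPos (m p)) ({wordQ} : Finset (UPWord Bool)) := by
    rw [Finset.disjoint_right]
    intro w hw hw2
    have hwQ := Finset.mem_singleton.mp hw
    subst hwQ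
    obtain ⟨p, hp, heq⟩ := Finset.mem_image.mp hw2
    have hlen := congrArg (fun u : UPWord Bool => u.v.length) heq
    beta_reduce at hlen
    rw [wordPos_v_length _ (by have := hm3 p hp; omega)] at hlen
    have : wordQ.v.length = 2 := rfl
    have := hm3 p hp
    omega
  rw [Finset.sum_union hdisj, Finset.sum_singleton, norm_wordQ,
    Finset.sum_image (wordPos_inj S m hm3 hinj)]
  rw [Finset.sum_congr rfl (fun p hp => norm_wordPos (m p) (by have := hm3 p hp; omega))]
  exact add_comm _ _

end LTLLower

open LTLLower in
/-- **Proposition (lower bound for LTL).** Let `Prop = {p, p̄}` (the type `Bool`).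
For every monotone fragment `F` of `LTL(Prop)` with `X ∈ Op'`, `U ∉ Op'`, and at
least one atomic proposition: for every `n` there is a sample of ultimately
periodic words of total size `k ≥ n` that is separable by a fragment formula, and
such that every separating fragment formula has size at least `2^√k`. -/
theorem ltl_lower_bound (F : LTLFragment Bool)
    (hmonoNot : ¬ F.hasNot) (hmonoOrAnd : ¬ F.hasOr ∨ ¬ F.hasAnd)
    (hnext : F.hasNext) (huntil : ¬ F.hasUntil)
    (hatom : F.atoms.Nonempty) :
    ∀ n : ℕ, ∃ Pos Neg : Finset (UPWord Bool),
      (∀ w ∈ Pos ∪ Neg, w.v ≠ []) ∧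
      n ≤ ∑ w ∈ Pos ∪ Neg, w.norm ∧
      (∃ φ : LTL Bool, F.Mem φ ∧
          (∀ w ∈ Pos, w.sat φ) ∧ (∀ w ∈ Neg, ¬ w.sat φ)) ∧
      (∀ φ : LTL Bool, F.Mem φ →
          (∀ w ∈ Pos, w.sat φ) → (∀ w ∈ Neg, ¬ w.sat φ) →
          (2 : ℝ) ^ Real.sqrt ((∑ w ∈ Pos ∪ Neg, w.norm : ℕ) : ℝ) ≤ (LTLsz φ : ℝ)) := by
  intro n
  classical
  obtain ⟨S, m, hm3, hmodd, hcop, hinj, hKn, hbig⟩ := numeric n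
  set M : ℕ := ∏ p ∈ S, m p with hMdef
  have hModd : M % 2 = 1 := prod_odd m S hmodd
  have hM1 : 1 ≤ M := by omega
  have hdvdM : ∀ p ∈ S, m p ∣ M := fun p hp => Finset.dvd_prod_of_mem m hp
  have hMdvdx : ∀ y, (∀ p ∈ S, m p ∣ y) → M ∣ y :=
    fun y h => prod_dvd_of_forall_dvd m S hcop h
  have hm1 : ∀ p ∈ S, 1 ≤ m p := fun p hp => by have := hm3 p hp; omega
  obtain ⟨b, hbF⟩ := hatom
  have hbF' : F.Mem (LTL.atom b) := hbF
  set φs : LTL Bool := Xpow M (LTL.atom b) with hφs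
  have hφsMem : F.Mem φs := Mem_Xpow hnext hbF' M
  have hMm0 : ∀ p ∈ S, M % m p = 0 := by
    intro p hp
    obtain ⟨c, hc⟩ := hdvdM p hp
    rw [hc]
    exact Nat.mul_mod_right _ _
  by_cases hA : F.hasAnd
  · -- ∧-case
    have hO : ¬ F.hasOr := hmonoOrAnd.resolve_right (fun h => h hA)
    refine ⟨S.image (fun p => wordPos (m p)), {wordQ}, ?_, ?_, ?_, ?_⟩
    · intro w hw
      rcases Finset.mem_union.mp hw with hw | hw
      · obtain ⟨p, hp, rfl⟩ := Finset.mem_image.mp hw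
        exact wordPos_vne _
      · rw [Finset.mem_singleton.mp hw]; exact wordQ_vne
    · rw [sum_words_pos S m hm3 hinj]
      exact hKn
    · refine ⟨φs, hφsMem, ?_, ?_⟩
      · intro w hw
        obtain ⟨p, hp, rfl⟩ := Finset.mem_image.mp hw
        rw [sat_iff_letter _ (wordPos_vne _), wordPos_letter _ (hm1 p hp), hφs,
          satInf_Xpow_atom]
        show b ∈ (Nw (m p) M)ᶜ
        unfold Nw
        rw [if_pos (hMm0 p hp), Set.compl_empty]
        trivial
      · intro w hw
        rw [Finset.mem_singleton.mp hw, sat_iff_letter _ wordQ_vne, wordQ_letter, hφs,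
          satInf_Xpow_atom]
        show ¬ b ∈ (Pw M)ᶜ
        unfold Pw
        rw [if_pos hModd, Set.compl_univ]
        simp
    · intro φ hmem hpos hneg
      rw [sum_words_pos S m hm3 hinj]
      have hnoU : noU φ := noU_of_Mem huntil φ hmem
      set ψ : LTL Bool := dualF φ with hψ
      have hψmem : (dualFrag F).Mem ψ := Mem_dualF φ hmem
      have hψP : satInf ψ Pw := by
        rw [hψ, satInf_dualF φ hnoU Pw]
        have := hneg wordQ (Finset.mem_singleton_self _)
        rwa [sat_iff_letter _ wordQ_vne, wordQ_letter] at this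
      have hψN : ∀ p ∈ S, ¬ satInf ψ (Nw (m p)) := by
        intro p hp hcontr
        rw [hψ, satInf_dualF φ hnoU (Nw (m p))] at hcontr
        apply hcontr
        have := hpos (wordPos (m p)) (Finset.mem_image_of_mem _ hp)
        rwa [sat_iff_letter _ (wordPos_vne _), wordPos_letter _ (hm1 p hp)] at this
      have hdep : M - 1 ≤ Xdepth φ := by
        by_contra hcon
        push_neg at hcon
        have hd2 : Xdepth ψ + 2 ≤ M := by rw [hψ, Xdepth_dualF]; omega
        obtain ⟨e, he, hmod⟩ := core S m M hModd hdvdM hMdvdx hcop (dualFrag F)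
          hmonoNot hO huntil ψ hψmem hd2 0 (by rwa [sh_zero])
          (fun p hp => by rw [sh_zero]; exact hψN p hp)
        rw [hψ, Xdepth_dualF] at he
        have hmod' : e % (2 * M) = M % (2 * M) := by simpa [Nat.ModEq] using hmod
        rw [Nat.mod_eq_of_lt (by omega), Nat.mod_eq_of_lt (by omega)] at hmod'
        omega
      have hsz : M ≤ LTLsz φ := by have := Xdepth_lt_sz φ; omega
      exact le_trans hbig (by exact_mod_cast hsz)
  · -- ∨-case
    refine ⟨{wordP}, S.image (fun p => wordN (m p)), ?_, ?_, ?_, ?_⟩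
    · intro w hw
      rcases Finset.mem_union.mp hw with hw | hw
      · rw [Finset.mem_singleton.mp hw]; exact wordP_vne
      · obtain ⟨p, hp, rfl⟩ := Finset.mem_image.mp hw
        exact wordN_vne _
    · rw [sum_words_or S m hm3 hinj]
      exact hKn
    · refine ⟨φs, hφsMem, ?_, ?_⟩
      · intro w hw
        rw [Finset.mem_singleton.mp hw, sat_iff_letter _ wordP_vne, wordP_letter, hφs,
          satInf_Xpow_atom]
        show b ∈ Pw M
        unfold Pw
        rw [if_pos hModd]
        trivial
      · intro w hw
        obtain ⟨p, hp, rfl⟩ := Finset.mem_image.mp hw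
        rw [sat_iff_letter _ (wordN_vne _), wordN_letter _ (hm1 p hp), hφs,
          satInf_Xpow_atom]
        show ¬ b ∈ Nw (m p) M
        unfold Nw
        rw [if_pos (hMm0 p hp)]
        simp
    · intro φ hmem hpos hneg
      rw [sum_words_or S m hm3 hinj]
      have hP : satInf φ Pw := by
        have := hpos wordP (Finset.mem_singleton_self _)
        rwa [sat_iff_letter _ wordP_vne, wordP_letter] at this
      have hN : ∀ p ∈ S, ¬ satInf φ (Nw (m p)) := by
        intro p hp hcontr
        have := hneg (wordN (m p)) (Finset.mem_image_of_mem _ hp)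
        rw [sat_iff_letter _ (wordN_vne _), wordN_letter _ (hm1 p hp)] at this
        exact this hcontr
      have hdep : M - 1 ≤ Xdepth φ := by
        by_contra hcon
        push_neg at hcon
        obtain ⟨e, he, hmod⟩ := core S m M hModd hdvdM hMdvdx hcop F
          hmonoNot hA huntil φ hmem (by omega) 0 (by rwa [sh_zero])
          (fun p hp => by rw [sh_zero]; exact hN p hp)
        have hmod' : e % (2 * M) = M % (2 * M) := by simpa [Nat.ModEq] using hmod
        rw [Nat.mod_eq_of_lt (by omega), Nat.mod_eq_of_lt (by omega)] at hmod'
        omega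
      have hsz : M ≤ LTLsz φ := by have := Xdepth_lt_sz φ; omega
      exact le_trans hbig (by exact_mod_cast hsz)
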